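/- Let u, v : ℝ³ → ℝ be smooth functions of (x, y, t) satisfying the Manakov–Santini system P(u) + u_x² = 0, P(v) = 0, where P = ∂_x∂_t − ∂_y² + (u − v_y)∂_x² + v_x ∂_x∂_y. Set a := v_x and b := u − v_y, and define Φ : ℝ⁴ → ℝ⁴ by Φ(x, y, t, μ) = (x, y, t, μ + v_x(x,y,t)). Let X̃₁ = ∂_y − (μ + v_x)∂_x − u_x ∂_μ and X̃₂ = ∂_t − (μ² + v_x μ − u + v_y)∂_x − (u_x μ + u_y)∂_μ be the Manakov–Santini Lax fields on ℝ⁴ with coordinates (x,y,t,μ), and let X₁ = ∂_t − (λ² − aλ − b)∂_x + m ∂_λ, X₂ = ∂_y − λ∂_x + n ∂_λ with m = −a_x λ² + (a a_x − a_y − b_x)λ + (a b_x − b_y), n = −a_x λ − b_x be the (MS2) Lax fields on ℝ⁴ with coordinates (x,y,t,λ). Then for every p ∈ ℝ⁴ one has DΦ(p)(X̃₁(p)) = X₂(Φ(p)) and DΦ(p)(X̃₂(p)) = X₁(Φ(p)), i.e. Φ pushes the Manakov–Santini Lax pair forward to the (MS2) Lax pair. -/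

import Mathlib

noncomputable section

/-- Partial derivative of `f` along the `i`-th coordinate direction on `ℝⁿ`.
Coordinates on `ℝ³` are `(x, y, t) = (0, 1, 2)`; on `ℝ⁴` the last coordinate
is the spectral parameter. -/
def pd {n : ℕ} (i : Fin n) (f : (Fin n → ℝ) → ℝ) : (Fin n → ℝ) → ℝ :=
  fun x => fderiv ℝ f x (Pi.single i 1)

/-- Projection `(x, y, t, ·) ↦ (x, y, t)`. -/
def π3 (p : Fin 4 → ℝ) : Fin 3 → ℝ := ![p 0, p 1, p 2]

/-- Manakov–Santini Lax field `X̃₁ = ∂_y − (μ + v_x)∂_x − u_x ∂_μ`. -/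
def msLax1 (u v : (Fin 3 → ℝ) → ℝ) : (Fin 4 → ℝ) → (Fin 4 → ℝ) :=
  fun p => ![-(p 3 + pd 0 v (π3 p)), 1, 0, -(pd 0 u (π3 p))]

/-- Manakov–Santini Lax field `X̃₂ = ∂_t − (μ² + v_x μ − u + v_y)∂_x − (u_x μ + u_y)∂_μ`. -/
def msLax2 (u v : (Fin 3 → ℝ) → ℝ) : (Fin 4 → ℝ) → (Fin 4 → ℝ) :=
  fun p =>
    ![-((p 3) ^ 2 + pd 0 v (π3 p) * p 3 - u (π3 p) + pd 1 v (π3 p)), 0, 1,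
      -(pd 0 u (π3 p) * p 3 + pd 1 u (π3 p))]

/-- (MS2) Lax field `X₁ = ∂_t − (λ² − aλ − b)∂_x + m ∂_λ` with
`m = −a_x λ² + (a a_x − a_y − b_x)λ + (a b_x − b_y)`. -/
def ms2Lax1 (a b : (Fin 3 → ℝ) → ℝ) : (Fin 4 → ℝ) → (Fin 4 → ℝ) :=
  fun p =>
    ![-((p 3) ^ 2 - a (π3 p) * p 3 - b (π3 p)), 0, 1,
      -(pd 0 a (π3 p)) * (p 3) ^ 2
        + (a (π3 p) * pd 0 a (π3 p) - pd 1 a (π3 p) - pd 0 b (π3 p)) * p 3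
        + (a (π3 p) * pd 0 b (π3 p) - pd 1 b (π3 p))]

/-- (MS2) Lax field `X₂ = ∂_y − λ∂_x + n ∂_λ` with `n = −a_x λ − b_x`. -/
def ms2Lax2 (a b : (Fin 3 → ℝ) → ℝ) : (Fin 4 → ℝ) → (Fin 4 → ℝ) :=
  fun p => ![-(p 3), 1, 0, -(pd 0 a (π3 p)) * p 3 - pd 0 b (π3 p)]

/-- The change of variables `Φ(x, y, t, μ) = (x, y, t, μ + v_x)`. -/
def Phi (v : (Fin 3 → ℝ) → ℝ) : (Fin 4 → ℝ) → (Fin 4 → ℝ) :=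
  fun p => ![p 0, p 1, p 2, p 3 + pd 0 v (π3 p)]


-- Auxiliary lemmas ------------------------------------------------------

/-- The projection `π3` as a continuous linear map. -/
def L3 : (Fin 4 → ℝ) →L[ℝ] (Fin 3 → ℝ) :=
  ContinuousLinearMap.pi (fun i => ContinuousLinearMap.proj (Fin.castSucc i))

lemma L3_eq (p : Fin 4 → ℝ) : L3 p = π3 p := by
  funext i; fin_cases i <;> rfl

lemma contDiff_pd {n : ℕ} (i : Fin n) (f : (Fin n → ℝ) → ℝ)
    (hf : ContDiff ℝ (⊤ : ℕ∞) f) : ContDiff ℝ (⊤ : ℕ∞) (pd i f) :=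
  (hf.fderiv_right (by norm_num)).clm_apply contDiff_const

lemma pd_comm {n : ℕ} (f : (Fin n → ℝ) → ℝ) (hf : ContDiff ℝ (⊤ : ℕ∞) f)
    (i j : Fin n) (x : Fin n → ℝ) : pd i (pd j f) x = pd j (pd i f) x := by
  have hdf : ∀ y, HasFDerivAt f (fderiv ℝ f y) y :=
    fun y => (hf.differentiable (by norm_num) y).hasFDerivAt
  have h2 : HasFDerivAt (fderiv ℝ f) (fderiv ℝ (fderiv ℝ f) x) x := by
    have h1 : ContDiff ℝ (⊤ : ℕ∞) (fderiv ℝ f) := hf.fderiv_right (by norm_num)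
    exact ((h1.differentiable (by norm_num)) x).hasFDerivAt
  have key : ∀ k l : Fin n, pd k (pd l f) x
      = fderiv ℝ (fderiv ℝ f) x (Pi.single k 1) (Pi.single l 1) := by
    intro k l
    have h3 : HasFDerivAt (fun y => fderiv ℝ f y (Pi.single l 1))
        ((fderiv ℝ (fderiv ℝ f) x).flip (Pi.single l 1)) x := by
      have := h2.clm_apply (hasFDerivAt_const (Pi.single l (1:ℝ)) x)
      simpa using this
    have hpl : pd l f = fun y => fderiv ℝ f y (Pi.single l 1) := rfl
    show fderiv ℝ (pd l f) x (Pi.single k 1) = _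
    rw [hpl, h3.fderiv]; rfl
  rw [key, key]
  exact second_derivative_symmetric hdf h2 _ _

lemma pd_sub {n : ℕ} (i : Fin n) (f g : (Fin n → ℝ) → ℝ) (x : Fin n → ℝ)
    (hf : DifferentiableAt ℝ f x) (hg : DifferentiableAt ℝ g x) :
    pd i (fun y => f y - g y) x = pd i f x - pd i g x := by
  show fderiv ℝ (fun y => f y - g y) x _ = _
  rw [fderiv_fun_sub hf hg]; rfl

lemma hasFDerivAt_Phi (v : (Fin 3 → ℝ) → ℝ) (hv : ContDiff ℝ (⊤ : ℕ∞) v)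
    (p : Fin 4 → ℝ) :
    HasFDerivAt (Phi v)
      (ContinuousLinearMap.id ℝ (Fin 4 → ℝ)
        + ((fderiv ℝ (pd 0 v) (π3 p)).comp L3).smulRight (Pi.single 3 1)) p := by
  have h1 : Phi v = fun q => q + (pd 0 v (π3 q)) • (Pi.single 3 1 : Fin 4 → ℝ) := by
    funext q i
    fin_cases i <;> simp [Phi, Pi.single_apply]
  rw [h1]
  have hg : HasFDerivAt (fun q : Fin 4 → ℝ => pd 0 v (π3 q))
      ((fderiv ℝ (pd 0 v) (π3 p)).comp L3) p := by
    have hd : HasFDerivAt (pd 0 v) (fderiv ℝ (pd 0 v) (π3 p)) (L3 p) := by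
      rw [L3_eq]
      exact (((contDiff_pd 0 v hv).differentiable (by norm_num)) (π3 p)).hasFDerivAt
    have h := hd.comp p L3.hasFDerivAt
    have heq : (fun q : Fin 4 → ℝ => pd 0 v (π3 q)) = (pd 0 v) ∘ ⇑L3 := by
      funext q; simp [Function.comp, L3_eq]
    rw [heq]; exact h
  exact (hasFDerivAt_id p).add (hg.smul_const _)

lemma fderiv_Phi (v : (Fin 3 → ℝ) → ℝ) (hv : ContDiff ℝ (⊤ : ℕ∞) v) (p h : Fin 4 → ℝ) :
    fderiv ℝ (Phi v) p h
      = h + (fderiv ℝ (pd 0 v) (π3 p) (π3 h)) • (Pi.single 3 1 : Fin 4 → ℝ) := by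
  rw [(hasFDerivAt_Phi v hv p).fderiv]
  simp [L3_eq]

lemma apply3 (D : (Fin 3 → ℝ) →L[ℝ] ℝ) (c0 c1 c2 : ℝ) :
    D ![c0, c1, c2]
      = c0 * D (Pi.single 0 1) + c1 * D (Pi.single 1 1) + c2 * D (Pi.single 2 1) := by
  have h : (![c0, c1, c2] : Fin 3 → ℝ)
      = c0 • (Pi.single 0 1 : Fin 3 → ℝ) + c1 • (Pi.single 1 1 : Fin 3 → ℝ)
        + c2 • (Pi.single 2 1 : Fin 3 → ℝ) := by
    funext i; fin_cases i <;> simp [Pi.single_apply]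
  rw [h]; simp

/-- If `(u, v)` solves the Manakov–Santini system, then the diffeomorphism
`Φ(x,y,t,μ) = (x,y,t,μ + v_x)` pushes the Manakov–Santini Lax pair forward to the
(MS2) Lax pair with `a = v_x`, `b = u − v_y`:
`DΦ(p)(X̃₁(p)) = X₂(Φ(p))` and `DΦ(p)(X̃₂(p)) = X₁(Φ(p))`. -/
theorem ms_lax_pushes_to_MS2_lax
    (u v : (Fin 3 → ℝ) → ℝ)
    (hu : ContDiff ℝ (⊤ : ℕ∞) u)
    (hv : ContDiff ℝ (⊤ : ℕ∞) v)
    (hMSu : ∀ x : Fin 3 → ℝ,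
      pd 0 (pd 2 u) x - pd 1 (pd 1 u) x + (u x - pd 1 v x) * pd 0 (pd 0 u) x
        + pd 0 v x * pd 0 (pd 1 u) x + (pd 0 u x) ^ 2 = 0)
    (hMSv : ∀ x : Fin 3 → ℝ,
      pd 0 (pd 2 v) x - pd 1 (pd 1 v) x + (u x - pd 1 v x) * pd 0 (pd 0 v) x
        + pd 0 v x * pd 0 (pd 1 v) x = 0) :
    ∀ p : Fin 4 → ℝ,
      fderiv ℝ (Phi v) p (msLax1 u v p)
        = ms2Lax2 (pd 0 v) (fun x => u x - pd 1 v x) (Phi v p) ∧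
      fderiv ℝ (Phi v) p (msLax2 u v p)
        = ms2Lax1 (pd 0 v) (fun x => u x - pd 1 v x) (Phi v p) := by
  intro p
  have hvdiff : Differentiable ℝ v := hv.differentiable (by norm_num)
  have hudiff : Differentiable ℝ u := hu.differentiable (by norm_num)
  have hp1v : Differentiable ℝ (pd 1 v) :=
    (contDiff_pd 1 v hv).differentiable (by norm_num)
  have hb0 : ∀ z, pd 0 (fun x => u x - pd 1 v x) z = pd 0 u z - pd 0 (pd 1 v) z :=
    fun z => pd_sub 0 u (pd 1 v) z (hudiff z) (hp1v z)
  have hb1 : ∀ z, pd 1 (fun x => u x - pd 1 v x) z = pd 1 u z - pd 1 (pd 1 v) z :=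
    fun z => pd_sub 1 u (pd 1 v) z (hudiff z) (hp1v z)
  have hc01 : ∀ z, pd 1 (pd 0 v) z = pd 0 (pd 1 v) z := pd_comm v hv 1 0
  have hc02 : ∀ z, pd 2 (pd 0 v) z = pd 0 (pd 2 v) z := pd_comm v hv 2 0
  have hq : π3 (Phi v p) = π3 p := by
    funext i; fin_cases i <;> rfl
  constructor
  · rw [fderiv_Phi v hv p]
    have hπ : π3 (msLax1 u v p) = ![-(p 3 + pd 0 v (π3 p)), 1, 0] := by
      funext i; fin_cases i <;> rfl
    have hD : fderiv ℝ (pd 0 v) (π3 p) (π3 (msLax1 u v p))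
        = -(p 3 + pd 0 v (π3 p)) * pd 0 (pd 0 v) (π3 p)
          + 1 * pd 1 (pd 0 v) (π3 p) + 0 * pd 2 (pd 0 v) (π3 p) := by
      rw [hπ, apply3]; rfl
    rw [hD]
    funext i
    fin_cases i <;>
      simp [msLax1, ms2Lax2, Phi, π3, Pi.single_apply, hb0, hc01]
    ring
  · rw [fderiv_Phi v hv p]
    have hπ : π3 (msLax2 u v p)
        = ![-((p 3) ^ 2 + pd 0 v (π3 p) * p 3 - u (π3 p) + pd 1 v (π3 p)), 0, 1] := by
      funext i; fin_cases i <;> rfl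
    have hD : fderiv ℝ (pd 0 v) (π3 p) (π3 (msLax2 u v p))
        = -((p 3) ^ 2 + pd 0 v (π3 p) * p 3 - u (π3 p) + pd 1 v (π3 p))
            * pd 0 (pd 0 v) (π3 p)
          + 0 * pd 1 (pd 0 v) (π3 p) + 1 * pd 2 (pd 0 v) (π3 p) := by
      rw [hπ, apply3]; rfl
    rw [hD]
    funext i
    fin_cases i <;>
      simp [msLax2, ms2Lax1, Phi, π3, Pi.single_apply, hb0, hb1, hc01, hc02]
    · ring
    · have hMS := hMSv (π3 p)
      simp only [π3] at hMS
      linear_combination hMS
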